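/- arXiv:1412.3518 — 4 statements merged into one kernel-verified Lean document; each statement's English description precedes it below -/
import Mathlib

section
/- (No triple alternation.) Suppose M₂ is a conservative extension of the extended causal model M₁, M₃ is a conservative extension of M₂, X⃗ = x⃗ is an actual cause of φ in both (M₁, u⃗) and (M₃, u⃗) under the extended HP definition, (M₂, u⃗) respects the equations for all endogenous variables of M₂ not in M₁, and (M₃, u⃗) respects the equations for all endogenous variables of M₃ not in M₂. Then X⃗ = x⃗ is an actual cause of φ in (M₂, u⃗). -/
open Classical

/-- A causal model over variable namespace ℕ (values are also coded as ℕ).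
`V` is the finite set of endogenous variables; `F X ctx g` gives the value of the
structural equation for `X` given a context `ctx` (assignment to the exogenous
variables) and an assignment `g` to the endogenous variables. -/
structure CM where
  V : Finset ℕ
  F : ℕ → (ℕ → ℕ) → (ℕ → ℕ) → ℕ

/-- `v` is a solution of all the structural equations of `M` in context `ctx`
(pinned to `0` outside `V` so that worlds are canonical). -/
def IsSol (M : CM) (ctx v : ℕ → ℕ) : Prop :=
  (∀ X ∈ M.V, v X = M.F X ctx v) ∧ ∀ X, X ∉ M.V → v X = 0

/-- `M` is recursive (acyclic): there is a total order on `V` such that each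
equation depends only on strictly earlier endogenous variables. -/
def Recursive (M : CM) : Prop :=
  ∃ ord : ℕ → ℕ, Set.InjOn ord ↑M.V ∧
    ∀ X ∈ M.V, ∀ ctx g h, (∀ Y ∈ M.V, ord Y < ord X → g Y = h Y) →
      M.F X ctx g = M.F X ctx h

/-- The model obtained by intervening according to the partial assignment `I`. -/
def CM.intervene (M : CM) (I : ℕ → Option ℕ) : CM :=
  ⟨M.V, fun X ctx g => (I X).getD (M.F X ctx g)⟩

/-- The intervention setting the variables in `S` to the values given by `f`. -/
def doSet (S : Finset ℕ) (f : ℕ → ℕ) : ℕ → Option ℕ :=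
  fun Y => if Y ∈ S then some (f Y) else none

/-- `(M, ctx) ⊨ [I](X = x)`. -/
def Sat (M : CM) (ctx : ℕ → ℕ) (I : ℕ → Option ℕ) (X x : ℕ) : Prop :=
  ∀ v, IsSol (M.intervene I) ctx v → v X = x

/-- Boolean combinations of primitive events `X = x`. -/
inductive BForm where
  | prim : ℕ → ℕ → BForm
  | not : BForm → BForm
  | and : BForm → BForm → BForm

def BForm.eval (v : ℕ → ℕ) : BForm → Prop
  | .prim X x => v X = x
  | .not φ => ¬ BForm.eval v φ
  | .and φ ψ => BForm.eval v φ ∧ BForm.eval v ψ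

def BForm.vars : BForm → Finset ℕ
  | .prim X _ => {X}
  | .not φ => φ.vars
  | .and φ ψ => φ.vars ∪ ψ.vars

/-- `(M, ctx) ⊨ [I]φ`. -/
def SatF (M : CM) (ctx : ℕ → ℕ) (I : ℕ → Option ℕ) (φ : BForm) : Prop :=
  ∀ v, IsSol (M.intervene I) ctx v → φ.eval v

/-- `M'` is a conservative extension of `M`: same exogenous variables (shared
namespace), `M.V ⊆ M'.V`, and for every context, every `X ∈ M.V`, and every
setting of the other variables of `M`, the intervened value of `X` agrees. -/
def ConsExt (M M' : CM) : Prop :=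
  M.V ⊆ M'.V ∧
  ∀ ctx x, ∀ X ∈ M.V, ∀ w : ℕ → ℕ,
    (Sat M ctx (doSet (M.V.erase X) w) X x ↔ Sat M' ctx (doSet (M.V.erase X) w) X x)

/-- The intervention `X⃗ ← x⃗', W⃗ ← w⃗` used in AC2(a). -/
def witI (Xs : Finset ℕ) (x' : ℕ → ℕ) (W : Finset ℕ) (w : ℕ → ℕ) : ℕ → Option ℕ :=
  fun Y => if Y ∈ Xs then some (x' Y) else if Y ∈ W then some (w Y) else none

/-- The intervention `X⃗ ← x⃗, Z⃗' ← z⃗, W⃗' ← w⃗` used in AC2(b) (here `vs` is the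
actual solution, providing the actual values `z⃗`). -/
def acbI (Xs : Finset ℕ) (xv : ℕ → ℕ) (Z' : Finset ℕ) (vs : ℕ → ℕ)
    (W' : Finset ℕ) (w : ℕ → ℕ) : ℕ → Option ℕ :=
  fun Y => if Y ∈ Xs then some (xv Y) else if Y ∈ Z' then some (vs Y)
    else if Y ∈ W' then some (w Y) else none

/-- `(W, w, x')` is a witness for AC2 (updated version, with AC2(b)). -/
def Wit (M : CM) (ctx : ℕ → ℕ) (Xs : Finset ℕ) (xv : ℕ → ℕ) (φ : BForm)
    (W : Finset ℕ) (w x' : ℕ → ℕ) : Prop :=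
  W ⊆ M.V ∧ Xs ⊆ M.V \ W ∧
  SatF M ctx (witI Xs x' W w) (BForm.not φ) ∧
  ∀ vs, IsSol M ctx vs → ∀ W' ⊆ W, ∀ Z' ⊆ M.V \ W,
    SatF M ctx (acbI Xs xv Z' vs W' w) φ

/-- `(W, w, x')` is a witness for AC2 in the original HP sense (with AC2(b'):
only `W` itself, not its subsets, is set to `w`). -/
def Wit' (M : CM) (ctx : ℕ → ℕ) (Xs : Finset ℕ) (xv : ℕ → ℕ) (φ : BForm)
    (W : Finset ℕ) (w x' : ℕ → ℕ) : Prop :=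
  W ⊆ M.V ∧ Xs ⊆ M.V \ W ∧
  SatF M ctx (witI Xs x' W w) (BForm.not φ) ∧
  ∀ vs, IsSol M ctx vs → ∀ Z' ⊆ M.V \ W,
    SatF M ctx (acbI Xs xv Z' vs W w) φ

/-- AC1: `X⃗ = x⃗` and `φ` hold in the actual world. -/
def AC1 (M : CM) (ctx : ℕ → ℕ) (Xs : Finset ℕ) (xv : ℕ → ℕ) (φ : BForm) : Prop :=
  ∀ v, IsSol M ctx v → (∀ X ∈ Xs, v X = xv X) ∧ φ.eval v

def PreCause (M : CM) (ctx : ℕ → ℕ) (Xs : Finset ℕ) (xv : ℕ → ℕ) (φ : BForm) : Prop :=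
  AC1 M ctx Xs xv φ ∧ ∃ W w x', Wit M ctx Xs xv φ W w x'

/-- The (updated) HP definition of actual cause: AC1 ∧ AC2 ∧ AC3. -/
def IsCause (M : CM) (ctx : ℕ → ℕ) (Xs : Finset ℕ) (xv : ℕ → ℕ) (φ : BForm) : Prop :=
  PreCause M ctx Xs xv φ ∧ ∀ Xs' ⊂ Xs, ¬ PreCause M ctx Xs' xv φ

def PreCause' (M : CM) (ctx : ℕ → ℕ) (Xs : Finset ℕ) (xv : ℕ → ℕ) (φ : BForm) : Prop :=
  AC1 M ctx Xs xv φ ∧ ∃ W w x', Wit' M ctx Xs xv φ W w x'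

/-- The original HP definition of actual cause (with AC2(b')). -/
def IsCause' (M : CM) (ctx : ℕ → ℕ) (Xs : Finset ℕ) (xv : ℕ → ℕ) (φ : BForm) : Prop :=
  PreCause' M ctx Xs xv φ ∧ ∀ Xs' ⊂ Xs, ¬ PreCause' M ctx Xs' xv φ

/-- An extended causal model: a causal model with a normality preorder on worlds. -/
structure ECM extends CM where
  normGE : (ℕ → ℕ) → (ℕ → ℕ) → Prop
  normGE_refl : ∀ s, normGE s s
  normGE_trans : ∀ s t u, normGE s t → normGE t u → normGE s u

/-- A world of `M`: an assignment to the endogenous variables (canonically `0` elsewhere). -/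
def World (M : CM) (s : ℕ → ℕ) : Prop := ∀ X, X ∉ M.V → s X = 0

/-- The world determined by the intervention `I` in context `ctx` is at least as
normal as the actual world `s_ctx`. -/
def NormAbove (M : ECM) (ctx : ℕ → ℕ) (I : ℕ → Option ℕ) : Prop :=
  ∀ s su, IsSol (M.toCM.intervene I) ctx s → IsSol M.toCM ctx su → M.normGE s su

/-- Witness for the extended HP definition: AC2 together with AC2(a⁺). -/
def EWit (M : ECM) (ctx : ℕ → ℕ) (Xs : Finset ℕ) (xv : ℕ → ℕ) (φ : BForm)
    (W : Finset ℕ) (w x' : ℕ → ℕ) : Prop :=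
  Wit M.toCM ctx Xs xv φ W w x' ∧ NormAbove M ctx (witI Xs x' W w)

def EPreCause (M : ECM) (ctx : ℕ → ℕ) (Xs : Finset ℕ) (xv : ℕ → ℕ) (φ : BForm) : Prop :=
  AC1 M.toCM ctx Xs xv φ ∧ ∃ W w x', EWit M ctx Xs xv φ W w x'

/-- The extended (normality-sensitive) HP definition of actual cause. -/
def EIsCause (M : ECM) (ctx : ℕ → ℕ) (Xs : Finset ℕ) (xv : ℕ → ℕ) (φ : BForm) : Prop :=
  EPreCause M ctx Xs xv φ ∧ ∀ Xs' ⊂ Xs, ¬ EPreCause M ctx Xs' xv φ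

/-- In world `s`, variable `v0` takes on a value other than that specified by
the equations of `M` in context `ctx`. -/
def Deviates (M : CM) (ctx : ℕ → ℕ) (v0 : ℕ) (s : ℕ → ℕ) : Prop :=
  ∀ v, IsSol (M.intervene (doSet (M.V.erase v0) s)) ctx v → v v0 ≠ s v0

/-- `(M, ctx)` respects the equations for `v0`: any world in which `v0` deviates
from its equation-determined value is not at least as normal as the actual world. -/
def Respects (M : ECM) (ctx : ℕ → ℕ) (v0 : ℕ) : Prop :=
  ∀ s, World M.toCM s → Deviates M.toCM ctx v0 s →
    ∀ su, IsSol M.toCM ctx su → ¬ M.normGE s su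

/-- Conservative extension of extended causal models: conservative extension of
the underlying models plus condition CE on the normality preorders. -/
def EConsExt (M M' : ECM) : Prop :=
  ConsExt M.toCM M'.toCM ∧
  ∀ ctx (W : Finset ℕ), W ⊆ M.V → ∀ w : ℕ → ℕ,
    (NormAbove M ctx (doSet W w) ↔ NormAbove M' ctx (doSet W w))

/-- Indicator of a proposition, used to express Boolean structural equations. -/
noncomputable def bI (p : Prop) : ℕ := if p then 1 else 0

section Auxiliary

@[simp] lemma intervene_V (M : CM) (I : ℕ → Option ℕ) : (M.intervene I).V = M.V := rfl

@[simp] lemma intervene_F (M : CM) (I : ℕ → Option ℕ) (X : ℕ) (ctx g : ℕ → ℕ) :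
    (M.intervene I).F X ctx g = (I X).getD (M.F X ctx g) := rfl

lemma isSol_intervene_none (M : CM) (ctx v : ℕ → ℕ) :
    IsSol (M.intervene fun _ => none) ctx v ↔ IsSol M ctx v := by
  simp [IsSol]

lemma eval_congr (φ : BForm) {a b : ℕ → ℕ} (h : ∀ Y ∈ φ.vars, a Y = b Y) :
    φ.eval a ↔ φ.eval b := by
  induction φ with
  | prim X x =>
      have : a X = b X := h X (by simp [BForm.vars])
      simp [BForm.eval, this]
  | not ψ ih =>
      simp only [BForm.eval]
      exact not_congr (ih h)
  | and ψ χ ih1 ih2 =>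
      simp only [BForm.eval]
      exact and_congr (ih1 fun Y hY => h Y (by simp [BForm.vars, hY]))
        (ih2 fun Y hY => h Y (by simp [BForm.vars, hY]))

lemma recursive_intervene {M : CM} (h : Recursive M) (I : ℕ → Option ℕ) :
    Recursive (M.intervene I) := by
  obtain ⟨ord, hinj, hdep⟩ := h
  refine ⟨ord, hinj, ?_⟩
  intro X hX ctx g g' hg
  simp only [intervene_F]
  rw [hdep X hX ctx g g' hg]

lemma sol_unique {M : CM} (h : Recursive M) {ctx v w : ℕ → ℕ}
    (hv : IsSol M ctx v) (hw : IsSol M ctx w) : v = w := by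
  obtain ⟨ord, hinj, hdep⟩ := h
  have key : ∀ n X, X ∈ M.V → ord X = n → v X = w X := by
    intro n
    induction n using Nat.strong_induction_on with
    | _ n ih =>
      intro X hX hord
      rw [hv.1 X hX, hw.1 X hX]
      apply hdep X hX
      intro Y hY hlt
      exact ih (ord Y) (hord ▸ hlt) Y hY rfl
  funext X
  by_cases hX : X ∈ M.V
  · exact key (ord X) X hX rfl
  · rw [hv.2 X hX, hw.2 X hX]

lemma sol_exists {M : CM} (h : Recursive M) (ctx : ℕ → ℕ) : ∃ v, IsSol M ctx v := by
  classical
  obtain ⟨ord, hinj, hdep⟩ := h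
  set G : (ℕ → ℕ) → ℕ → ℕ := fun g X => if X ∈ M.V then M.F X ctx g else 0 with hG
  set rk : ℕ → ℕ := fun X => (M.V.filter fun Y => ord Y < ord X).card with hrk
  have hrklt : ∀ X ∈ M.V, ∀ Y ∈ M.V, ord Y < ord X → rk Y < rk X := by
    intro X hX Y hY hlt
    apply Finset.card_lt_card
    constructor
    · intro Z hZ
      simp only [Finset.mem_filter] at hZ ⊢
      exact ⟨hZ.1, hZ.2.trans hlt⟩
    · intro hsub
      have hmem : Y ∈ M.V.filter fun Z => ord Z < ord Y :=
        hsub (by simp [Finset.mem_filter, hY, hlt])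
      simp [Finset.mem_filter] at hmem
  have stab : ∀ r X, X ∈ M.V → rk X = r → ∀ (g : ℕ → ℕ) (m n : ℕ), r < m → r < n →
      G^[m] g X = G^[n] g X := by
    intro r
    induction r using Nat.strong_induction_on with
    | _ r ih =>
      intro X hX hr g m n hm hn
      obtain ⟨m', rfl⟩ : ∃ m', m = m' + 1 := ⟨m - 1, by omega⟩
      obtain ⟨n', rfl⟩ : ∃ n', n = n' + 1 := ⟨n - 1, by omega⟩
      rw [Function.iterate_succ_apply' G m' g, Function.iterate_succ_apply' G n' g]
      show G (G^[m'] g) X = G (G^[n'] g) X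
      simp only [hG, if_pos hX]
      apply hdep X hX
      intro Y hY hlt
      have h1 : rk Y < r := hr ▸ hrklt X hX Y hY hlt
      exact ih (rk Y) h1 Y hY rfl g m' n' (by omega) (by omega)
  have hrkcard : ∀ X ∈ M.V, rk X < M.V.card := by
    intro X hX
    apply Finset.card_lt_card
    constructor
    · exact Finset.filter_subset _ _
    · intro hsub
      have hmem := hsub hX
      simp [Finset.mem_filter] at hmem
  refine ⟨G^[M.V.card + 1] (fun _ => 0), ?_, ?_⟩
  · intro X hX
    have h1 : G^[M.V.card + 1] (fun _ => 0) X = M.F X ctx (G^[M.V.card] (fun _ => 0)) := by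
      rw [Function.iterate_succ_apply' G M.V.card (fun _ => 0)]
      show G _ X = _
      simp only [hG, if_pos hX]
    rw [h1]
    apply hdep X hX
    intro Y hY hlt
    exact stab (rk Y) Y hY rfl _ M.V.card (M.V.card + 1)
      (hrkcard Y hY) ((hrkcard Y hY).trans (Nat.lt_succ_self _))
  · intro X hX
    rw [Function.iterate_succ_apply' G M.V.card (fun _ => 0)]
    show G _ X = 0
    simp only [hG, if_neg hX]

def restr (M : CM) (s : ℕ → ℕ) : ℕ → ℕ := fun X => if X ∈ M.V then s X else 0

lemma restrict_sol {M M' : CM} (hrec : Recursive M) (hrec' : Recursive M')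
    (hext : ConsExt M M') (ctx : ℕ → ℕ) (I : ℕ → Option ℕ)
    (hI : ∀ Y, I Y ≠ none → Y ∈ M.V)
    {s' : ℕ → ℕ} (hs' : IsSol (M'.intervene I) ctx s') :
    IsSol (M.intervene I) ctx (restr M s') := by
  constructor
  · intro X hX
    have hXM : X ∈ M.V := hX
    simp only [intervene_F]
    cases hIX : I X with
    | some a =>
      have h0 := hs'.1 X (hext.1 hXM)
      simp only [intervene_F, hIX, Option.getD_some] at h0
      simp [restr, hXM, h0]
    | none =>
      simp only [Option.getD_none]
      -- s' is a solution of M' intervened by fixing all other M-variables to their s' values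
      have hsolJ : IsSol (M'.intervene (doSet (M.V.erase X) s')) ctx s' := by
        refine ⟨?_, hs'.2⟩
        intro Y hY
        simp only [intervene_F]
        by_cases hYe : Y ∈ M.V.erase X
        · simp [doSet, hYe]
        · have hIY : I Y = none := by
            by_cases hYX : Y = X
            · subst hYX; exact hIX
            · by_cases hYM : Y ∈ M.V
              · exact absurd (Finset.mem_erase.mpr ⟨hYX, hYM⟩) hYe
              · by_contra hc; exact hYM (hI Y hc)
          have h2 := hs'.1 Y hY
          simp only [intervene_F, hIY, Option.getD_none] at h2
          simp [doSet, hYe, h2]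
      have hSat' : Sat M' ctx (doSet (M.V.erase X) s') X (s' X) := by
        intro v hv
        rw [sol_unique (recursive_intervene hrec' _) hv hsolJ]
      have hSat : Sat M ctx (doSet (M.V.erase X) s') X (s' X) :=
        (hext.2 ctx (s' X) X hXM s').mpr hSat'
      obtain ⟨t, ht⟩ := sol_exists (recursive_intervene hrec (doSet (M.V.erase X) s')) ctx
      have htX : t X = s' X := hSat t ht
      have hteq : t = restr M s' := by
        funext Y
        by_cases hYM : Y ∈ M.V
        · by_cases hYX : Y = X
          · subst hYX; rw [htX]; simp [restr, hYM]
          · have h3 := ht.1 Y hYM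
            simp only [intervene_F] at h3
            rw [show doSet (M.V.erase X) s' Y = some (s' Y) by
              simp [doSet, Finset.mem_erase, hYX, hYM]] at h3
            simp only [Option.getD_some] at h3
            rw [h3]; simp [restr, hYM]
        · rw [ht.2 Y hYM]; simp [restr, hYM]
      have h4 := ht.1 X hXM
      simp only [intervene_F] at h4
      rw [show doSet (M.V.erase X) s' X = none by simp [doSet]] at h4
      simp only [Option.getD_none] at h4
      have h5 : restr M s' X = s' X := by simp [restr, hXM]
      rw [h5, ← htX, h4, hteq]
  · intro X hX
    have hXM : X ∉ M.V := hX
    simp [restr, hXM]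

lemma satF_iff {M M' : CM} (hrec : Recursive M) (hrec' : Recursive M')
    (hext : ConsExt M M') (ctx : ℕ → ℕ) (I : ℕ → Option ℕ)
    (hI : ∀ Y, I Y ≠ none → Y ∈ M.V) (φ : BForm) (hφ : φ.vars ⊆ M.V) :
    SatF M ctx I φ ↔ SatF M' ctx I φ := by
  obtain ⟨s', hs'⟩ := sol_exists (recursive_intervene hrec' I) ctx
  have hres := restrict_sol hrec hrec' hext ctx I hI hs'
  have hcong : φ.eval (restr M s') ↔ φ.eval s' :=
    eval_congr φ (fun Y hY => by simp [restr, hφ hY])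
  constructor
  · intro h v hv
    rw [sol_unique (recursive_intervene hrec' I) hv hs']
    exact hcong.mp (h _ hres)
  · intro h v hv
    rw [sol_unique (recursive_intervene hrec I) hv hres]
    exact hcong.mpr (h _ hs')

/-- Key lemma: extended pre-causes transfer down along conservative extensions
(with the respecting-the-equations hypothesis). -/
lemma epre_down {M M' : ECM} (hrec : Recursive M.toCM) (hrec' : Recursive M'.toCM)
    (hext : EConsExt M M') (ctx : ℕ → ℕ) (Xs : Finset ℕ) (hXs : Xs ⊆ M.V)
    (xv : ℕ → ℕ) (φ : BForm) (hφ : φ.vars ⊆ M.V)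
    (hr : ∀ v0 ∈ M'.V \ M.V, Respects M' ctx v0)
    (hpc : EPreCause M' ctx Xs xv φ) : EPreCause M ctx Xs xv φ := by
  obtain ⟨hAC1', W', w', x', ⟨⟨hW'sub, hXsub', hnφ, hacb⟩, hnorm'⟩⟩ := hpc
  obtain ⟨su', hsu'⟩ := sol_exists hrec' ctx
  obtain ⟨sp, hsp⟩ := sol_exists (recursive_intervene hrec' (witI Xs x' W' w')) ctx
  -- the new variables of M' do not deviate in the witness world sp
  have hEq : ∀ v0 ∈ M'.V \ M.V, sp v0 = M'.toCM.F v0 ctx sp := by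
    intro v0 hv0
    have hndev : ¬ Deviates M'.toCM ctx v0 sp := by
      intro hdev
      exact hr v0 hv0 sp (fun X hX => hsp.2 X hX) hdev su' hsu' (hnorm' sp su' hsp hsu')
    unfold Deviates at hndev
    push_neg at hndev
    obtain ⟨v, hv, hvv0⟩ := hndev
    have hv0V : v0 ∈ M'.V := (Finset.mem_sdiff.mp hv0).1
    have hveq : v = sp := by
      funext Y
      by_cases hY : Y ∈ M'.V.erase v0
      · have h1 := hv.1 Y (Finset.mem_of_mem_erase hY)
        simp only [intervene_F] at h1
        rw [show doSet (M'.V.erase v0) sp Y = some (sp Y) by simp [doSet, hY]] at h1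
        simpa using h1
      · by_cases hY0 : Y = v0
        · subst hY0; exact hvv0
        · by_cases hYV : Y ∈ M'.V
          · exact absurd (Finset.mem_erase.mpr ⟨hY0, hYV⟩) hY
          · rw [hv.2 Y hYV, hsp.2 Y hYV]
    have heq0 := hv.1 v0 hv0V
    simp only [intervene_F] at heq0
    rw [show doSet (M'.V.erase v0) sp v0 = none by simp [doSet]] at heq0
    simp only [Option.getD_none] at heq0
    rw [hveq] at heq0
    exact heq0
  set W : Finset ℕ := W' ∩ M.V with hWdef
  have hWsubM : W ⊆ M.V := Finset.inter_subset_right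
  have hWsubW' : W ⊆ W' := Finset.inter_subset_left
  -- sp also solves the intervention with W in place of W'
  have hspW : IsSol (M'.toCM.intervene (witI Xs x' W w')) ctx sp := by
    refine ⟨?_, hsp.2⟩
    intro Y hY
    have h0 := hsp.1 Y hY
    simp only [intervene_F] at h0 ⊢
    by_cases h1 : Y ∈ Xs
    · simp only [witI, if_pos h1, Option.getD_some] at h0 ⊢
      exact h0
    · by_cases h2 : Y ∈ W
      · have h2' : Y ∈ W' := hWsubW' h2
        simp only [witI, if_neg h1, if_pos h2, if_pos h2', Option.getD_some] at h0 ⊢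
        exact h0
      · simp only [witI, if_neg h1, if_neg h2, Option.getD_none]
        by_cases h3 : Y ∈ W'
        · have hYM : Y ∉ M.V := fun hYM => h2 (Finset.mem_inter.mpr ⟨h3, hYM⟩)
          exact hEq Y (Finset.mem_sdiff.mpr ⟨hY, hYM⟩)
        · simp only [witI, if_neg h1, if_neg h3, Option.getD_none] at h0
          exact h0
  have hnφW : SatF M'.toCM ctx (witI Xs x' W w') (BForm.not φ) := by
    intro v hv
    rw [sol_unique (recursive_intervene hrec' _) hv hspW]
    exact hnφ sp hsp
  have hnormW' : NormAbove M' ctx (witI Xs x' W w') := by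
    intro s su hs hsu
    rw [sol_unique (recursive_intervene hrec' _) hs hspW]
    exact hnorm' sp su hsp hsu
  have hwd : witI Xs x' W w' = doSet (Xs ∪ W) (fun Y => if Y ∈ Xs then x' Y else w' Y) := by
    funext Y
    by_cases h1 : Y ∈ Xs <;> by_cases h2 : Y ∈ W <;> simp [witI, doSet, h1, h2]
  have hnormW : NormAbove M ctx (witI Xs x' W w') := by
    rw [hwd]
    rw [hwd] at hnormW'
    exact (hext.2 ctx (Xs ∪ W) (Finset.union_subset hXs hWsubM) _).mpr hnormW'
  have hIwit : ∀ Y, witI Xs x' W w' Y ≠ none → Y ∈ M.V := by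
    intro Y hYne
    by_cases h1 : Y ∈ Xs
    · exact hXs h1
    · by_cases h2 : Y ∈ W
      · exact hWsubM h2
      · simp [witI, h1, h2] at hYne
  have hnφM : SatF M.toCM ctx (witI Xs x' W w') (BForm.not φ) :=
    (satF_iff hrec hrec' hext.1 ctx _ hIwit (BForm.not φ) (by simpa [BForm.vars] using hφ)).mpr hnφW
  have hsu'I : IsSol (M'.toCM.intervene fun _ => none) ctx su' :=
    (isSol_intervene_none _ _ _).mpr hsu'
  have hresu : IsSol M.toCM ctx (restr M.toCM su') :=
    (isSol_intervene_none _ _ _).mp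
      (restrict_sol hrec hrec' hext.1 ctx (fun _ => none) (by simp) hsu'I)
  have hAC1M : AC1 M.toCM ctx Xs xv φ := by
    intro v hv
    rw [sol_unique hrec hv hresu]
    obtain ⟨ha, hb⟩ := hAC1' su' hsu'
    refine ⟨?_, (eval_congr φ (fun Y hY => by simp [restr, hφ hY])).mpr hb⟩
    intro X hXmem
    simpa [restr, hXs hXmem] using ha X hXmem
  have hacbM : ∀ vs, IsSol M.toCM ctx vs → ∀ W'' ⊆ W, ∀ Z' ⊆ M.V \ W,
      SatF M.toCM ctx (acbI Xs xv Z' vs W'' w') φ := by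
    intro vs hvs W'' hW'' Z' hZ'
    have hvseq : vs = restr M.toCM su' := sol_unique hrec hvs hresu
    have hZ'M : Z' ⊆ M.V := fun Y hY => (Finset.mem_sdiff.mp (hZ' hY)).1
    have hZ'' : Z' ⊆ M'.V \ W' := by
      intro Y hY
      obtain ⟨hYM, hYW⟩ := Finset.mem_sdiff.mp (hZ' hY)
      exact Finset.mem_sdiff.mpr
        ⟨hext.1.1 hYM, fun hYW' => hYW (Finset.mem_inter.mpr ⟨hYW', hYM⟩)⟩
    have hW''W' : W'' ⊆ W' := hW''.trans hWsubW'
    have hIeq : acbI Xs xv Z' vs W'' w' = acbI Xs xv Z' su' W'' w' := by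
      funext Y
      by_cases h1 : Y ∈ Xs
      · simp [acbI, h1]
      · by_cases h2 : Y ∈ Z'
        · simp [acbI, h1, h2, hvseq, restr, hZ'M h2]
        · simp [acbI, h1, h2]
    have hsat' : SatF M'.toCM ctx (acbI Xs xv Z' su' W'' w') φ :=
      hacb su' hsu' W'' hW''W' Z' hZ''
    have hIsup : ∀ Y, acbI Xs xv Z' su' W'' w' Y ≠ none → Y ∈ M.V := by
      intro Y hYne
      by_cases h1 : Y ∈ Xs
      · exact hXs h1
      by_cases h2 : Y ∈ Z'
      · exact hZ'M h2
      by_cases h3 : Y ∈ W''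
      · exact hWsubM (hW'' h3)
      simp [acbI, h1, h2, h3] at hYne
    rw [hIeq]
    exact (satF_iff hrec hrec' hext.1 ctx _ hIsup φ hφ).mpr hsat'
  have hXsW : Xs ⊆ M.V \ W := by
    intro X hXmem
    refine Finset.mem_sdiff.mpr ⟨hXs hXmem, fun hXW => ?_⟩
    exact (Finset.mem_sdiff.mp (hXsub' hXmem)).2 (hWsubW' hXW)
  exact ⟨hAC1M, W, w', x', ⟨⟨hWsubM, hXsW, hnφM, hacbM⟩, hnormW⟩⟩

end Auxiliary

/-- no triple alternation: if X⃗ = x⃗ is a cause in M₁ and in M₃,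
where M₂ conservatively extends M₁ and M₃ conservatively extends M₂ (with the
respecting-the-equations hypotheses), then X⃗ = x⃗ is also a cause in M₂. -/
theorem no_triple_alternation (M1 M2 M3 : ECM)
    (h1 : Recursive M1.toCM) (h2 : Recursive M2.toCM) (h3 : Recursive M3.toCM)
    (h12 : EConsExt M1 M2) (h23 : EConsExt M2 M3)
    (ctx : ℕ → ℕ) (Xs : Finset ℕ) (hXs : Xs ⊆ M1.V)
    (xv : ℕ → ℕ) (φ : BForm) (hφ : φ.vars ⊆ M1.V)
    (hc1 : EIsCause M1 ctx Xs xv φ) (hc3 : EIsCause M3 ctx Xs xv φ)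
    (hr2 : ∀ v0 ∈ M2.V \ M1.V, Respects M2 ctx v0)
    (hr3 : ∀ v0 ∈ M3.V \ M2.V, Respects M3 ctx v0) :
    EIsCause M2 ctx Xs xv φ := by
  have hpc2 : EPreCause M2 ctx Xs xv φ :=
    epre_down h2 h3 h23 ctx Xs (hXs.trans h12.1.1) xv φ (hφ.trans h12.1.1) hr3 hc3.1
  refine ⟨hpc2, ?_⟩
  intro Xs' hsub hpc
  exact hc1.2 Xs' hsub
    (epre_down h1 h2 h12 ctx Xs' (fun x hx => hXs (hsub.1 hx)) xv φ hφ hr2 hpc)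
end

section
/- In the voting model M with binary endogenous variables A, B, C, D, WIN, equations B = A, C = A, D = B ∧ C, WIN = A ∨ B ∨ D, and context u with A = 1 (so B = C = D = WIN = 1), with all worlds equally normal: B = 1 is an actual cause of WIN = 1 (with witness W⃗ = {A}, A ← 0), and consequently B = 1 ∧ C = 1 is not an actual cause of WIN = 1 (by minimality AC3). -/
open Classical

/-- The voting model M: A = 0, B = 1, C = 2, D = 3, WIN = 4; A is set by the
context, B = A, C = A, D = B ∧ C, WIN = A ∨ B ∨ D; all worlds equally normal. -/
noncomputable def M15 : ECM :=
  ⟨⟨{0, 1, 2, 3, 4}, fun X ctx g =>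
    if X = 0 then ctx 0
    else if X = 1 then g 0
    else if X = 2 then g 0
    else if X = 3 then bI (g 1 = 1 ∧ g 2 = 1)
    else bI (g 0 = 1 ∨ g 1 = 1 ∨ g 3 = 1)⟩,
   fun _ _ => True, fun _ => trivial, fun _ _ _ _ _ => trivial⟩

/-! Auxiliary machinery: the unique solution of `M15` under an intervention `I`
in the context `fun _ => 1`. -/

noncomputable def s0' (I : ℕ → Option ℕ) : ℕ := (I 0).getD 1
noncomputable def s1' (I : ℕ → Option ℕ) : ℕ := (I 1).getD (s0' I)
noncomputable def s2' (I : ℕ → Option ℕ) : ℕ := (I 2).getD (s0' I)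
noncomputable def s3' (I : ℕ → Option ℕ) : ℕ := (I 3).getD (bI (s1' I = 1 ∧ s2' I = 1))
noncomputable def s4' (I : ℕ → Option ℕ) : ℕ :=
  (I 4).getD (bI (s0' I = 1 ∨ s1' I = 1 ∨ s3' I = 1))

noncomputable def sol (I : ℕ → Option ℕ) : ℕ → ℕ := fun X =>
  if X = 0 then s0' I else if X = 1 then s1' I else if X = 2 then s2' I
  else if X = 3 then s3' I else if X = 4 then s4' I else 0

lemma sol_isSol (I : ℕ → Option ℕ) :
    IsSol (M15.toCM.intervene I) (fun _ => 1) (sol I) := by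
  constructor
  · intro X hX
    simp only [M15, CM.intervene] at hX ⊢
    fin_cases hX <;>
      simp [sol, s0', s1', s2', s3', s4', M15]
  · intro X hX
    simp only [M15, CM.intervene, Finset.mem_insert, Finset.mem_singleton] at hX
    push_neg at hX
    simp [sol, hX.1, hX.2.1, hX.2.2.1, hX.2.2.2.1, hX.2.2.2.2]

lemma sol_unique_s15 (I : ℕ → Option ℕ) (v : ℕ → ℕ)
    (hv : IsSol (M15.toCM.intervene I) (fun _ => 1) v) : v = sol I := by
  obtain ⟨h1, h2⟩ := hv
  have e0 : v 0 = s0' I := by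
    have := h1 0 (by simp [M15, CM.intervene]); simpa [M15, CM.intervene, s0'] using this
  have e1 : v 1 = s1' I := by
    have := h1 1 (by simp [M15, CM.intervene])
    simpa [M15, CM.intervene, s1', e0] using this
  have e2 : v 2 = s2' I := by
    have := h1 2 (by simp [M15, CM.intervene])
    simpa [M15, CM.intervene, s2', e0] using this
  have e3 : v 3 = s3' I := by
    have := h1 3 (by simp [M15, CM.intervene])
    simpa [M15, CM.intervene, s3', e1, e2] using this
  have e4 : v 4 = s4' I := by
    have := h1 4 (by simp [M15, CM.intervene])
    simpa [M15, CM.intervene, s4', e0, e1, e3] using this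
  funext X
  by_cases hX : X = 0
  · subst hX; simpa [sol] using e0
  by_cases hX1 : X = 1
  · subst hX1; simpa [sol] using e1
  by_cases hX2 : X = 2
  · subst hX2; simpa [sol] using e2
  by_cases hX3 : X = 3
  · subst hX3; simpa [sol] using e3
  by_cases hX4 : X = 4
  · subst hX4; simpa [sol] using e4
  have : X ∉ M15.toCM.V := by
    simp [M15, hX, hX1, hX2, hX3, hX4]
  rw [h2 X this]
  simp [sol, hX, hX1, hX2, hX3, hX4]

lemma isSol_none_iff (v : ℕ → ℕ) :
    IsSol M15.toCM (fun _ => 1) v ↔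
      IsSol (M15.toCM.intervene (fun _ => none)) (fun _ => 1) v := Iff.rfl

lemma sol_isSol_none : IsSol M15.toCM (fun _ => 1) (sol (fun _ => none)) :=
  (isSol_none_iff _).2 (sol_isSol _)

lemma sol_unique_none (v : ℕ → ℕ) (hv : IsSol M15.toCM (fun _ => 1) v) :
    v = sol (fun _ => none) := sol_unique_s15 _ _ ((isSol_none_iff _).1 hv)

lemma sol_none_eval : sol (fun _ => none) 1 = 1 ∧ sol (fun _ => none) 4 = 1 := by
  constructor <;> simp [sol, s0', s1', s2', s3', s4', bI]

/-- If `B` is forced to `1` and `WIN` is forced to `1` or free, `WIN = 1`. -/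
lemma sol_win (I : ℕ → Option ℕ) (h1 : I 1 = some 1)
    (h4 : I 4 = none ∨ I 4 = some 1) : sol I 4 = 1 := by
  have hs1 : s1' I = 1 := by simp [s1', h1]
  rcases h4 with h | h <;> simp [sol, s4', h, bI, hs1]

lemma ewit_one :
    EWit M15 (fun _ => 1) {1} (fun _ => 1) (.prim 4 1) {0} (fun _ => 0) (fun _ => 0) := by
  refine ⟨⟨by simp [M15], by simp [M15], ?_, ?_⟩, fun _ _ _ _ => trivial⟩
  · -- AC2(a)
    intro v hv
    rw [sol_unique_s15 _ v hv]
    simp [BForm.eval, sol, s0', s1', s2', s3', s4', witI, bI]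
  · -- AC2(b)
    intro vs hvs W' hW' Z' hZ' v hv
    rw [sol_unique_s15 _ v hv]
    have hvs' := sol_unique_none vs hvs
    show sol _ 4 = 1
    apply sol_win
    · simp [acbI]
    · by_cases h4 : 4 ∈ Z'
      · right
        have h4W : (4 : ℕ) ∉ W' := fun h => by
          have := hW' h; simp at this
        simp [acbI, h4, h4W, hvs', sol_none_eval.2]
      · left
        have h4W : (4 : ℕ) ∉ W' := fun h => by
          have := hW' h; simp at this
        simp [acbI, h4, h4W]

lemma pre_one : EPreCause M15 (fun _ => 1) {1} (fun _ => 1) (.prim 4 1) := by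
  refine ⟨?_, {0}, fun _ => 0, fun _ => 0, ewit_one⟩
  intro v hv
  rw [sol_unique_none v hv]
  refine ⟨fun X hX => ?_, sol_none_eval.2⟩
  simp only [Finset.mem_singleton] at hX
  subst hX
  exact sol_none_eval.1

lemma not_pre_empty : ¬ EPreCause M15 (fun _ => 1) (∅ : Finset ℕ) (fun _ => 1) (.prim 4 1) := by
  rintro ⟨_, W, w, x', ⟨⟨hW, _, h2a, h2b⟩, _⟩⟩
  have hb := h2b (sol (fun _ => none)) sol_isSol_none W subset_rfl ∅ (Finset.empty_subset _)
  set I₀ := acbI ∅ (fun _ => 1) ∅ (sol fun _ => none) W w with hI₀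
  have hIeq : witI ∅ x' W w = I₀ := by
    funext Y; simp [witI, acbI, hI₀]
  have hsol := sol_isSol I₀
  have h1 := hb (sol I₀) hsol
  have h2 := h2a (sol I₀) (hIeq ▸ hsol)
  exact h2 h1

/-- in (M, u) with A = 1, B = 1 is an actual cause of WIN = 1
(with witness W⃗ = {A}, A ← 0), and consequently B = 1 ∧ C = 1 is not. -/
theorem voting_M :
    EWit M15 (fun _ => 1) {1} (fun _ => 1) (.prim 4 1) {0} (fun _ => 0) (fun _ => 0) ∧
    EIsCause M15 (fun _ => 1) {1} (fun _ => 1) (.prim 4 1) ∧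
    ¬ EIsCause M15 (fun _ => 1) ({1, 2} : Finset ℕ) (fun _ => 1) (.prim 4 1) := by
  refine ⟨ewit_one, ?_, ?_⟩
  · refine ⟨pre_one, ?_⟩
    intro Xs' hXs'
    rw [Finset.ssubset_singleton_iff] at hXs'
    subst hXs'
    exact not_pre_empty
  · rintro ⟨_, h3⟩
    exact h3 {1} (by decide) pre_one
end

section
/- In the prisoner model with binary endogenous variables A, B, C, D, equation D = (A ∧ B) ∨ C, and context u with A = 1, B = 0, C = 1 (so D = 1): A = 1 is an actual cause of D = 1 under the original HP definition using AC2(b'), with witness W⃗ = {B, C}, w⃗ = (B = 1, C = 0); but A = 1 is not an actual cause of D = 1 under the updated HP definition using AC2(b), since (M, u) ⊨ [A ← 1, C ← 0](D = 0). -/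
open Classical

/-- The prisoner model: A = 0, B = 1, C = 2, D = 3; A, B, C set by the context,
D = (A ∧ B) ∨ C. -/
noncomputable def MP : CM :=
  ⟨{0, 1, 2, 3}, fun X ctx g =>
    if X = 3 then bI ((g 0 = 1 ∧ g 1 = 1) ∨ g 2 = 1) else ctx X⟩

/-- The context with A = 1, B = 0, C = 1. -/
def uP : ℕ → ℕ := fun i => if i = 1 then 0 else 1


noncomputable def solOf (I : ℕ → Option ℕ) (ctx : ℕ → ℕ) : ℕ → ℕ :=
  fun X =>
    if X = 0 then (I 0).getD (ctx 0)
    else if X = 1 then (I 1).getD (ctx 1)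
    else if X = 2 then (I 2).getD (ctx 2)
    else if X = 3 then (I 3).getD (bI (((I 0).getD (ctx 0) = 1 ∧ (I 1).getD (ctx 1) = 1)
      ∨ (I 2).getD (ctx 2) = 1))
    else 0

lemma solOf_isSol (I : ℕ → Option ℕ) (ctx : ℕ → ℕ) :
    IsSol (MP.intervene I) ctx (solOf I ctx) := by
  constructor
  · intro X hX
    simp only [MP, CM.intervene, Finset.mem_insert, Finset.mem_singleton] at hX
    rcases hX with rfl | rfl | rfl | rfl <;> simp [solOf, MP, CM.intervene]
  · intro X hX
    simp only [MP, CM.intervene, Finset.mem_insert, Finset.mem_singleton, not_or] at hX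
    obtain ⟨h0, h1, h2, h3⟩ := hX
    simp [solOf, h0, h1, h2, h3]

lemma isSol_eq (I : ℕ → Option ℕ) (ctx v : ℕ → ℕ)
    (h : IsSol (MP.intervene I) ctx v) : ∀ X, v X = solOf I ctx X := by
  obtain ⟨heq, hout⟩ := h
  have h0 : v 0 = (I 0).getD (ctx 0) := heq 0 (by simp [MP, CM.intervene])
  have h1 : v 1 = (I 1).getD (ctx 1) := heq 1 (by simp [MP, CM.intervene])
  have h2 : v 2 = (I 2).getD (ctx 2) := heq 2 (by simp [MP, CM.intervene])
  have h3 : v 3 = (I 3).getD (bI ((v 0 = 1 ∧ v 1 = 1) ∨ v 2 = 1)) := heq 3 (by simp [MP, CM.intervene])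
  intro X
  by_cases hx0 : X = 0
  · subst hx0; simpa [solOf] using h0
  by_cases hx1 : X = 1
  · subst hx1; simpa [solOf] using h1
  by_cases hx2 : X = 2
  · subst hx2; simpa [solOf] using h2
  by_cases hx3 : X = 3
  · subst hx3; rw [h3, h0, h1, h2]; simp [solOf]
  · rw [hout X (by simp [MP, CM.intervene, hx0, hx1, hx2, hx3])]
    simp [solOf, hx0, hx1, hx2, hx3]

lemma satF_iff_s18 (I : ℕ → Option ℕ) (ctx : ℕ → ℕ) (φ : BForm) :
    SatF MP ctx I φ ↔ φ.eval (solOf I ctx) := by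
  constructor
  · intro h; exact h _ (solOf_isSol I ctx)
  · intro h v hv
    have : v = solOf I ctx := funext (isSol_eq I ctx v hv)
    rw [this]; exact h

lemma MP_self : MP = MP.intervene (fun _ => none) := rfl

lemma isSolMP_eq (ctx v : ℕ → ℕ) (h : IsSol MP ctx v) :
    ∀ X, v X = solOf (fun _ => none) ctx X := by
  exact isSol_eq _ ctx v (MP_self ▸ h)

/-- in the prisoner model with A = 1, B = 0, C = 1, A = 1 is an
actual cause of D = 1 under the original HP definition (AC2(b')) with witness
W⃗ = {B, C}, (B ← 1, C ← 0), but not under the updated definition (AC2(b)),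
since (M, u) ⊨ [A ← 1, C ← 0](D = 0). -/
theorem prisoner :
    IsCause' MP uP {0} (fun _ => 1) (.prim 3 1) ∧
    Wit' MP uP {0} (fun _ => 1) (.prim 3 1) {1, 2} (fun Y => if Y = 1 then 1 else 0)
      (fun _ => 0) ∧
    ¬ IsCause MP uP {0} (fun _ => 1) (.prim 3 1) ∧
    SatF MP uP (doSet {0, 2} (fun Y => if Y = 0 then 1 else 0)) (.prim 3 0) := by
  have hvsMP : IsSol MP uP (solOf (fun _ => none) uP) := MP_self ▸ solOf_isSol _ uP
  -- AC1
  have hAC1 : ∀ Xs : Finset ℕ, Xs ⊆ {0} → AC1 MP uP Xs (fun _ => 1) (.prim 3 1) := by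
    intro Xs hXs v hv
    have hval := isSolMP_eq uP v hv
    constructor
    · intro X hX
      have : X = 0 := by simpa using hXs hX
      subst this
      rw [hval 0]; simp [solOf, uP]
    · show v 3 = 1
      rw [hval 3]; simp [solOf, uP, bI]
  -- the Wit' witness
  have hWit' : Wit' MP uP {0} (fun _ => 1) (.prim 3 1) {1, 2}
      (fun Y => if Y = 1 then 1 else 0) (fun _ => 0) := by
    refine ⟨?_, ?_, ?_, ?_⟩
    · intro x hx
      simp only [Finset.mem_insert, Finset.mem_singleton] at hx
      rcases hx with rfl | rfl <;> simp [MP]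
    · intro x hx
      simp only [Finset.mem_singleton] at hx
      subst hx; simp [MP]
    · rw [satF_iff_s18]
      show ¬ _ = _
      simp [solOf, witI, bI]
    · intro vs hvs Z' hZ'
      have hvs3 : vs 3 = 1 := by
        rw [isSolMP_eq uP vs hvs 3]; simp [solOf, uP, bI]
      have h1 : (1 : ℕ) ∉ Z' := by
        intro h; have := hZ' h; simp [MP] at this
      have h2 : (2 : ℕ) ∉ Z' := by
        intro h; have := hZ' h; simp [MP] at this
      rw [satF_iff_s18]
      show solOf _ uP 3 = 1
      by_cases h3 : (3 : ℕ) ∈ Z'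
      · simp [solOf, acbI, h3, hvs3]
      · simp [solOf, acbI, h1, h2, h3, bI]
  -- no cause with empty Xs (updated or original): AC2(a) and AC2(b/b') clash
  have hEmpty' : ¬ PreCause' MP uP ∅ (fun _ => 1) (.prim 3 1) := by
    rintro ⟨-, W, w0, x0, hW, hXs, ha, hb⟩
    have hb' := hb _ hvsMP ∅ (by simp [MP, Finset.empty_subset])
    have heqI : witI ∅ x0 W w0 = acbI ∅ (fun _ => 1) ∅ (solOf (fun _ => none) uP) W w0 := by
      funext Y; simp [witI, acbI]
    have h1 := ha _ (solOf_isSol (witI ∅ x0 W w0) uP)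
    have h2 := hb' _ (solOf_isSol _ uP)
    rw [heqI] at h1
    exact h1 h2
  refine ⟨⟨⟨hAC1 {0} (Finset.Subset.refl _), ⟨{1, 2}, _, _, hWit'⟩⟩, ?_⟩, hWit', ?_, ?_⟩
  · -- minimality for IsCause'
    intro Xs' hss
    have : Xs' = ∅ := Finset.eq_empty_of_ssubset_singleton hss
    subst this
    exact hEmpty'
  · -- not a cause under updated definition
    rintro ⟨⟨-, W, w0, x0, hW, hXs, ha, hb⟩, -⟩
    have h0W : (0 : ℕ) ∉ W := by
      intro h
      have := hXs (Finset.mem_singleton_self 0)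
      rw [Finset.mem_sdiff] at this
      exact this.2 h
    have ha' := ha _ (solOf_isSol (witI {0} x0 W w0) uP)
    change ¬ solOf _ uP 3 = 1 at ha'
    by_cases h3 : (3 : ℕ) ∈ W
    · -- then AC2(b) with W' = {3} forces w0 3 = 1, contradicting AC2(a)
      have hb' := hb _ hvsMP {3} (Finset.singleton_subset_iff.mpr h3) ∅
        (by simp [MP, Finset.empty_subset]) _ (solOf_isSol _ uP)
      change solOf _ uP 3 = 1 at hb'
      simp [solOf, acbI] at hb'
      simp [solOf, witI, h0W, h3, hb'] at ha'
    · -- then AC2(a) forces 2 ∈ W with w0 2 ≠ 1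
      have h2W : (2 : ℕ) ∈ W ∧ w0 2 ≠ 1 := by
        by_cases h2 : (2 : ℕ) ∈ W
        · refine ⟨h2, ?_⟩
          intro hw2
          simp [solOf, witI, h0W, h2, h3, hw2, bI] at ha'
        · exfalso
          simp [solOf, witI, h0W, h2, h3, uP, bI] at ha'
      have hb' := hb _ hvsMP {2} (Finset.singleton_subset_iff.mpr h2W.1) ∅
        (by simp [MP, Finset.empty_subset]) _ (solOf_isSol _ uP)
      change solOf _ uP 3 = 1 at hb'
      simp [solOf, acbI, uP, bI, h2W.2] at hb'
  · -- [A ← 1, C ← 0] (D = 0)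
    rw [satF_iff_s18]
    show solOf _ uP 3 = 0
    simp [solOf, doSet, uP, bI]
end

section
/- In the prisoner model extended with binary variable E satisfying E = A ∧ B and D = E ∨ C (variables A, B, C set by context; in context u, A = 1, B = 0, C = 1, hence E = 0, D = 1): A = 1 is not an actual cause of D = 1, under both the original HP definition (using AC2(b')) and the updated HP definition (using AC2(b)). Moreover, this extended model is a conservative extension of the original prisoner model with D = (A ∧ B) ∨ C. -/
open Classical

/-- The extended prisoner model: adds E = 4 with E = A ∧ B and D = E ∨ C. -/
noncomputable def MP2 : CM :=
  ⟨{0, 1, 2, 3, 4}, fun X ctx g =>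
    if X = 4 then bI (g 0 = 1 ∧ g 1 = 1)
    else if X = 3 then bI (g 4 = 1 ∨ g 2 = 1)
    else ctx X⟩

/-! ### Auxiliary lemmas -/

@[simp] lemma bI_eq_one {p : Prop} : bI p = 1 ↔ p := by
  unfold bI; split <;> simp_all

/-- The unique solution of `MP.intervene I` in context `ctx`. -/
noncomputable def sol1 (I : ℕ → Option ℕ) (ctx : ℕ → ℕ) : ℕ → ℕ := fun X =>
  if X = 0 then (I 0).getD (ctx 0)
  else if X = 1 then (I 1).getD (ctx 1)
  else if X = 2 then (I 2).getD (ctx 2)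
  else if X = 3 then (I 3).getD (bI (((I 0).getD (ctx 0) = 1 ∧ (I 1).getD (ctx 1) = 1)
      ∨ (I 2).getD (ctx 2) = 1))
  else 0

/-- The unique solution of `MP2.intervene I` in context `ctx`. -/
noncomputable def sol2 (I : ℕ → Option ℕ) (ctx : ℕ → ℕ) : ℕ → ℕ := fun X =>
  if X = 0 then (I 0).getD (ctx 0)
  else if X = 1 then (I 1).getD (ctx 1)
  else if X = 2 then (I 2).getD (ctx 2)
  else if X = 4 then (I 4).getD (bI ((I 0).getD (ctx 0) = 1 ∧ (I 1).getD (ctx 1) = 1))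
  else if X = 3 then (I 3).getD (bI ((I 4).getD (bI ((I 0).getD (ctx 0) = 1 ∧
      (I 1).getD (ctx 1) = 1)) = 1 ∨ (I 2).getD (ctx 2) = 1))
  else 0

lemma sol1_isSol (I : ℕ → Option ℕ) (ctx : ℕ → ℕ) :
    IsSol (MP.intervene I) ctx (sol1 I ctx) := by
  constructor
  · intro X hX
    simp only [MP, CM.intervene] at hX ⊢
    fin_cases hX <;> simp [sol1]
  · intro X hX
    simp only [MP, CM.intervene, Finset.mem_insert, Finset.mem_singleton] at hX
    push_neg at hX
    simp [sol1, hX.1, hX.2.1, hX.2.2.1, hX.2.2.2]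

lemma sol1_unique {I : ℕ → Option ℕ} {ctx v : ℕ → ℕ}
    (h : IsSol (MP.intervene I) ctx v) : ∀ X, v X = sol1 I ctx X := by
  obtain ⟨h1, h2⟩ := h
  have e0 : v 0 = (I 0).getD (ctx 0) := by
    have := h1 0 (by simp [MP, CM.intervene]); simpa [MP, CM.intervene] using this
  have e1 : v 1 = (I 1).getD (ctx 1) := by
    have := h1 1 (by simp [MP, CM.intervene]); simpa [MP, CM.intervene] using this
  have e2 : v 2 = (I 2).getD (ctx 2) := by
    have := h1 2 (by simp [MP, CM.intervene]); simpa [MP, CM.intervene] using this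
  have e3 : v 3 = (I 3).getD (bI ((v 0 = 1 ∧ v 1 = 1) ∨ v 2 = 1)) := by
    have := h1 3 (by simp [MP, CM.intervene]); simpa [MP, CM.intervene] using this
  intro X
  by_cases hx0 : X = 0; · simp [hx0, sol1, e0]
  by_cases hx1 : X = 1; · simp [hx1, sol1, e1]
  by_cases hx2 : X = 2; · simp [hx2, sol1, e2]
  by_cases hx3 : X = 3
  · subst hx3; rw [e3, e0, e1, e2]; simp [sol1]
  · rw [h2 X (by simp [MP, CM.intervene, hx0, hx1, hx2, hx3])]
    simp [sol1, hx0, hx1, hx2, hx3]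

lemma sol2_isSol (I : ℕ → Option ℕ) (ctx : ℕ → ℕ) :
    IsSol (MP2.intervene I) ctx (sol2 I ctx) := by
  constructor
  · intro X hX
    simp only [MP2, CM.intervene] at hX ⊢
    fin_cases hX <;> simp [sol2]
  · intro X hX
    simp only [MP2, CM.intervene, Finset.mem_insert, Finset.mem_singleton] at hX
    push_neg at hX
    simp [sol2, hX.1, hX.2.1, hX.2.2.1, hX.2.2.2.1, hX.2.2.2.2]

lemma sol2_unique {I : ℕ → Option ℕ} {ctx v : ℕ → ℕ}
    (h : IsSol (MP2.intervene I) ctx v) : ∀ X, v X = sol2 I ctx X := by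
  obtain ⟨h1, h2⟩ := h
  have e0 : v 0 = (I 0).getD (ctx 0) := by
    have := h1 0 (by simp [MP2, CM.intervene]); simpa [MP2, CM.intervene] using this
  have e1 : v 1 = (I 1).getD (ctx 1) := by
    have := h1 1 (by simp [MP2, CM.intervene]); simpa [MP2, CM.intervene] using this
  have e2 : v 2 = (I 2).getD (ctx 2) := by
    have := h1 2 (by simp [MP2, CM.intervene]); simpa [MP2, CM.intervene] using this
  have e4 : v 4 = (I 4).getD (bI (v 0 = 1 ∧ v 1 = 1)) := by
    have := h1 4 (by simp [MP2, CM.intervene]); simpa [MP2, CM.intervene] using this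
  have e3 : v 3 = (I 3).getD (bI (v 4 = 1 ∨ v 2 = 1)) := by
    have := h1 3 (by simp [MP2, CM.intervene]); simpa [MP2, CM.intervene] using this
  intro X
  by_cases hx0 : X = 0; · simp [hx0, sol1, e0, sol2]
  by_cases hx1 : X = 1; · simp [hx1, sol2, e1]
  by_cases hx2 : X = 2; · simp [hx2, sol2, e2]
  by_cases hx4 : X = 4
  · subst hx4; rw [e4, e0, e1]; simp [sol2]
  by_cases hx3 : X = 3
  · subst hx3; rw [e3, e4, e0, e1, e2]; simp [sol2]
  · rw [h2 X (by simp [MP2, CM.intervene, hx0, hx1, hx2, hx3, hx4])]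
    simp [sol2, hx0, hx1, hx2, hx3, hx4]

lemma sat1_iff {I : ℕ → Option ℕ} {ctx : ℕ → ℕ} {X x : ℕ} :
    Sat MP ctx I X x ↔ sol1 I ctx X = x :=
  ⟨fun h => h _ (sol1_isSol I ctx), fun h v hv => (sol1_unique hv X).trans h⟩

lemma sat2_iff {I : ℕ → Option ℕ} {ctx : ℕ → ℕ} {X x : ℕ} :
    Sat MP2 ctx I X x ↔ sol2 I ctx X = x :=
  ⟨fun h => h _ (sol2_isSol I ctx), fun h v hv => (sol2_unique hv X).trans h⟩

lemma isSol_MP2_iff {ctx v : ℕ → ℕ} (h : IsSol MP2 ctx v) :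
    IsSol (MP2.intervene (fun _ => none)) ctx v := h

lemma wit_wit' {M : CM} {ctx : ℕ → ℕ} {Xs : Finset ℕ} {xv : ℕ → ℕ} {φ : BForm}
    {W : Finset ℕ} {w x' : ℕ → ℕ} (h : Wit M ctx Xs xv φ W w x') :
    Wit' M ctx Xs xv φ W w x' :=
  ⟨h.1, h.2.1, h.2.2.1, fun vs hvs Z' hZ => h.2.2.2 vs hvs W le_rfl Z' hZ⟩

lemma notPre' : ¬ PreCause' MP2 uP {0} (fun _ => 1) (.prim 3 1) := by
  rintro ⟨_, W, w, x', hWV, hXW, hA, hB⟩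
  have h0W : (0 : ℕ) ∉ W := by
    have := hXW (Finset.mem_singleton_self 0)
    exact (Finset.mem_sdiff.mp this).2
  -- actual solution
  set vs : ℕ → ℕ := sol2 (fun _ => none) uP with hvsdef
  have hvs : IsSol MP2 uP vs := sol2_isSol (fun _ => none) uP
  have hvs4 : vs 4 = 0 := by simp [hvsdef, sol2, uP, bI]
  -- solution of the AC2(a) intervention
  set I : ℕ → Option ℕ := witI {0} x' W w with hIdef
  have hs3 : ¬ (sol2 I uP 3 = 1) := hA _ (sol2_isSol I uP)
  by_cases h3W : (3 : ℕ) ∈ W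
  · -- D is frozen to w 3 ≠ 1; contradiction with AC2(b') for Z' = ∅
    have hw3 : w 3 ≠ 1 := by
      intro h; apply hs3; simp [hIdef, sol2, witI, h3W, h]
    have := hB vs hvs ∅ (Finset.empty_subset _) _
      (sol2_isSol (acbI {0} (fun _ => 1) ∅ vs W w) uP)
    apply hw3
    simpa [BForm.eval, sol2, acbI, h3W] using this
  · have hs3' : ¬ (sol2 I uP 4 = 1 ∨ sol2 I uP 2 = 1) := by
      intro h; apply hs3; simp [sol2, hIdef, witI, h3W]
      have h4 : sol2 I uP 4 = (I 4).getD (bI ((I 0).getD (uP 0) = 1 ∧ (I 1).getD (uP 1) = 1)) := by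
        simp [sol2]
      have h2 : sol2 I uP 2 = (I 2).getD (uP 2) := by simp [sol2]
      rw [h4, h2] at h
      simpa [hIdef, witI] using h
    push_neg at hs3'
    obtain ⟨hs4, hs2⟩ := hs3'
    have h2W : (2 : ℕ) ∈ W := by
      by_contra h2W
      apply hs2; simp [sol2, hIdef, witI, h2W, uP]
    have hw2 : w 2 ≠ 1 := by
      intro h; apply hs2; simp [sol2, hIdef, witI, h2W, h]
    by_cases h4W : (4 : ℕ) ∈ W
    · -- E frozen to w 4 ≠ 1, C frozen to w 2 ≠ 1; take Z' = ∅
      have hw4 : w 4 ≠ 1 := by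
        intro h; apply hs4; simp [sol2, hIdef, witI, h4W, h]
      have := hB vs hvs ∅ (Finset.empty_subset _) _
        (sol2_isSol (acbI {0} (fun _ => 1) ∅ vs W w) uP)
      simp [BForm.eval, sol2, acbI, h3W, h4W, h2W, hw4, hw2, bI] at this
    · -- take Z' = {4}: E gets its actual value 0
      have hZ : ({4} : Finset ℕ) ⊆ MP2.V \ W := by
        intro y hy
        simp only [Finset.mem_singleton] at hy
        subst hy
        exact Finset.mem_sdiff.mpr ⟨by simp [MP2], h4W⟩
      have := hB vs hvs {4} hZ _
        (sol2_isSol (acbI {0} (fun _ => 1) {4} vs W w) uP)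
      simp [BForm.eval, sol2, acbI, h3W, h4W, h2W, hw2, hvs4, bI] at this

/-- in the extended prisoner model, A = 1 is not an actual cause
of D = 1 under either the original (AC2(b')) or the updated (AC2(b)) HP
definition, and the extended model is a conservative extension of the original. -/
theorem prisoner_extended :
    ¬ IsCause' MP2 uP {0} (fun _ => 1) (.prim 3 1) ∧
    ¬ IsCause MP2 uP {0} (fun _ => 1) (.prim 3 1) ∧
    ConsExt MP MP2 := by
  refine ⟨fun h => notPre' h.1, fun h => ?_, ?_, ?_⟩
  · exact notPre' ⟨h.1.1, let ⟨W, w, x', hW⟩ := h.1.2; ⟨W, w, x', wit_wit' hW⟩⟩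
  · intro y hy; simp only [MP, Finset.mem_insert, Finset.mem_singleton] at hy
    simp only [MP2, Finset.mem_insert, Finset.mem_singleton]; tauto
  · intro ctx x X hX w
    rw [sat1_iff, sat2_iff]
    simp only [MP, Finset.mem_insert, Finset.mem_singleton] at hX
    have key : sol1 (doSet (MP.V.erase X) w) ctx X = sol2 (doSet (MP.V.erase X) w) ctx X := by
      have hV : MP.V = ({0, 1, 2, 3} : Finset ℕ) := rfl
      rcases hX with h | h | h | h <;> subst h <;>
        simp [sol1, sol2, doSet, hV, bI]
    rw [key]
end
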